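/- arXiv:2102.07876 — 3 statements merged into one kernel-verified Lean document; each statement's English description precedes it below -/
import Mathlib

section
/- Let (X, μ) be a finite measure space, γ > 1, and let f_n : X → ℝ be nonnegative measurable functions with sup_n ‖f_n‖_{L^γ(X,μ)} < ∞. Suppose μ({x : f_n(x) ≥ ρ̄}) → 0 as n → ∞ for some constant ρ̄ > 0, and that f_n → f weakly in L^γ(X,μ) (i.e., ∫_X f_n g dμ → ∫_X f g dμ for every g ∈ L^{γ'}(X,μ), 1/γ + 1/γ' = 1). Then f ≤ ρ̄ almost everywhere on X. -/
open MeasureTheory Filter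
open scoped ENNReal

/-- The truncation argument: if nonnegative `f_n` are bounded in `L^γ(μ)`, `μ` finite,
`μ({f_n ≥ ρ̄}) → 0`, and `f_n → f` weakly in `L^γ`, then `f ≤ ρ̄` a.e. -/
theorem weak_limit_le_of_superlevel_tendsto_zero
    {X : Type*} [MeasurableSpace X] (μ : Measure X) [IsFiniteMeasure μ]
    (γ : ℝ) (hγ : 1 < γ)
    (f : ℕ → X → ℝ) (flim : X → ℝ)
    (hmeas : ∀ n, Measurable (f n))
    (hnonneg : ∀ n x, 0 ≤ f n x)
    (hbdd : ∃ C : ℝ≥0∞, C < ⊤ ∧ ∀ n, eLpNorm (f n) (ENNReal.ofReal γ) μ ≤ C)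
    (hflim : MemLp flim (ENNReal.ofReal γ) μ)
    (ρ : ℝ) (hρ : 0 < ρ)
    (hsmall : Filter.Tendsto (fun n : ℕ => μ {x | ρ ≤ f n x}) Filter.atTop (nhds 0))
    (hweak : ∀ g : X → ℝ, MemLp g (ENNReal.ofReal (γ / (γ - 1))) μ →
      Filter.Tendsto (fun n : ℕ => ∫ x, f n x * g x ∂μ) Filter.atTop
        (nhds (∫ x, flim x * g x ∂μ))) :
    ∀ᵐ x ∂μ, flim x ≤ ρ := by
  obtain ⟨C, hC, hCn⟩ := hbdd
  have hγ0 : 0 < γ := by linarith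
  set q : ℝ := γ / (γ - 1) with hq_def
  have hpq : γ.HolderConjugate q := Real.HolderConjugate.conjExponent hγ
  have hq0 : 0 < q := hpq.symm.pos
  have hp1 : (1 : ℝ≥0∞) ≤ ENNReal.ofReal γ := by
    rw [← ENNReal.ofReal_one]
    exact ENNReal.ofReal_le_ofReal hγ.le
  have hmem : ∀ n, MemLp (f n) (ENNReal.ofReal γ) μ := fun n =>
    ⟨(hmeas n).aestronglyMeasurable, lt_of_le_of_lt (hCn n) hC⟩
  have hint : ∀ n, Integrable (f n) μ := fun n => (hmem n).integrable hp1
  have hintlim : Integrable flim μ := hflim.integrable hp1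
  set E : ℕ → Set X := fun n => {x | ρ ≤ f n x} with hE_def
  have hEmeas : ∀ n, MeasurableSet (E n) := fun n => measurableSet_le measurable_const (hmeas n)
  -- Hölder bound on ∫_{E n} f n
  have holder : ∀ n, ∫ x in E n, f n x ∂μ ≤ C.toReal * ((μ (E n)).toReal) ^ (1 / q) := by
    intro n
    have h1 : ∫ x in E n, f n x ∂μ = (∫⁻ x in E n, ENNReal.ofReal (f n x) ∂μ).toReal := by
      rw [integral_eq_lintegral_of_nonneg_ae (Filter.Eventually.of_forall fun x => hnonneg n x)
        ((hmeas n).aestronglyMeasurable.restrict)]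
    rw [h1]
    have h2 : ∫⁻ x in E n, ENNReal.ofReal (f n x) ∂μ
        = ∫⁻ x, ENNReal.ofReal (f n x) * (E n).indicator (fun _ => (1 : ℝ≥0∞)) x ∂μ := by
      rw [← lintegral_indicator (hEmeas n)]
      congr 1
      ext x
      by_cases hx : x ∈ E n <;> simp [Set.indicator_apply, hx]
    rw [h2]
    have h3 := ENNReal.lintegral_mul_le_Lp_mul_Lq μ hpq
      (g := (E n).indicator (fun _ => (1 : ℝ≥0∞)))
      ((hmeas n).ennreal_ofReal.aemeasurable)
      ((measurable_const.indicator (hEmeas n)).aemeasurable)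
    have h4 : (∫⁻ x, (E n).indicator (fun _ => (1 : ℝ≥0∞)) x ^ q ∂μ) ^ (1 / q)
        = μ (E n) ^ (1 / q) := by
      have heq : ∀ x, (E n).indicator (fun _ => (1 : ℝ≥0∞)) x ^ q
          = (E n).indicator (fun _ => (1 : ℝ≥0∞)) x := by
        intro x
        by_cases hx : x ∈ E n <;> simp [Set.indicator_apply, hx, ENNReal.zero_rpow_of_pos hq0]
      simp only [heq]
      rw [lintegral_indicator (hEmeas n)]
      simp
    have h5 : (∫⁻ x, ENNReal.ofReal (f n x) ^ γ ∂μ) ^ (1 / γ) ≤ C := by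
      have hCn' := hCn n
      rw [eLpNorm_eq_lintegral_rpow_enorm_toReal (by positivity) (by simp),
        ENNReal.toReal_ofReal hγ0.le] at hCn'
      have : ∀ x, ‖f n x‖ₑ ^ γ = ENNReal.ofReal (f n x) ^ γ := by
        intro x
        rw [← ofReal_norm, Real.norm_of_nonneg (hnonneg n x)]
      simpa [this] using hCn'
    have h6 : ∫⁻ x, ENNReal.ofReal (f n x) * (E n).indicator (fun _ => (1 : ℝ≥0∞)) x ∂μ
        ≤ C * μ (E n) ^ (1 / q) := by
      refine h3.trans ?_
      rw [h4]
      exact mul_le_mul_left h5 _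
    have hfin : μ (E n) ^ (1 / q) ≠ ⊤ := by
      exact ENNReal.rpow_ne_top_of_nonneg (by positivity) (measure_ne_top μ _)
    calc (∫⁻ x, ENNReal.ofReal (f n x) * (E n).indicator (fun _ => (1 : ℝ≥0∞)) x ∂μ).toReal
        ≤ (C * μ (E n) ^ (1 / q)).toReal :=
          ENNReal.toReal_mono (ENNReal.mul_ne_top hC.ne hfin) h6
      _ = C.toReal * ((μ (E n)).toReal) ^ (1 / q) := by
          rw [ENNReal.toReal_mul, ENNReal.toReal_rpow]
  -- the superlevel-set measures tend to 0 (real-valued, raised to power 1/q)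
  have hμE0 : Tendsto (fun n => ((μ (E n)).toReal) ^ (1 / q)) atTop (nhds 0) := by
    have h0 : Tendsto (fun n => (μ (E n)).toReal) atTop (nhds 0) := by
      have := (ENNReal.tendsto_toReal (a := 0) (by simp)).comp hsmall
      exact this
    have := h0.rpow_const (Or.inr (by positivity : (0:ℝ) ≤ 1 / q))
    have hz : (0:ℝ) ^ q⁻¹ = 0 := Real.zero_rpow (by positivity)
    simpa [one_div, hz] using this
  -- key inequality for indicator test functions
  have key : ∀ S : Set X, MeasurableSet S → ∫ x in S, flim x ∂μ ≤ ρ * (μ S).toReal := by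
    intro S hS
    set g : X → ℝ := S.indicator (fun _ => (1 : ℝ)) with hg_def
    have hg : MemLp g (ENNReal.ofReal q) μ :=
      memLp_indicator_const _ hS 1 (Or.inr (measure_ne_top μ S))
    have heq : ∀ h : X → ℝ, ∫ x, h x * g x ∂μ = ∫ x in S, h x ∂μ := by
      intro h
      have : (fun x => h x * g x) = S.indicator h := by
        funext x
        by_cases hx : x ∈ S <;> simp [hg_def, Set.indicator_apply, hx]
      rw [this, integral_indicator hS]
    have hgw := hweak g hg
    simp only [heq] at hgw
    have hbound : ∀ n, ∫ x in S, f n x ∂μ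
        ≤ ρ * (μ S).toReal + C.toReal * ((μ (E n)).toReal) ^ (1 / q) := by
      intro n
      have hptw : ∀ x ∈ S, f n x ≤ ρ + (E n).indicator (f n) x := by
        intro x _
        by_cases hx : x ∈ E n
        · simp only [Set.indicator_of_mem hx]
          linarith [hnonneg n x]
        · simp only [Set.indicator_of_notMem hx]
          have : ¬ ρ ≤ f n x := hx
          linarith [not_le.mp this]
      have hi1 : IntegrableOn (f n) S μ := (hint n).integrableOn
      have hi2 : IntegrableOn (fun x => ρ + (E n).indicator (f n) x) S μ :=
        ((integrable_const ρ).add ((hint n).indicator (hEmeas n))).integrableOn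
      calc ∫ x in S, f n x ∂μ
          ≤ ∫ x in S, (ρ + (E n).indicator (f n) x) ∂μ :=
            setIntegral_mono_on hi1 hi2 hS hptw
        _ = ρ * (μ S).toReal + ∫ x in S, (E n).indicator (f n) x ∂μ := by
            rw [integral_add (integrable_const ρ).integrableOn
              ((hint n).indicator (hEmeas n)).integrableOn, setIntegral_const,
              smul_eq_mul, mul_comm, measureReal_def]
        _ ≤ ρ * (μ S).toReal + ∫ x, (E n).indicator (f n) x ∂μ := by
            refine add_le_add_right (setIntegral_le_integral ((hint n).indicator (hEmeas n))
              (Filter.Eventually.of_forall fun x => ?_)) _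
            exact Set.indicator_nonneg (fun y _ => hnonneg n y) x
        _ = ρ * (μ S).toReal + ∫ x in E n, f n x ∂μ := by rw [integral_indicator (hEmeas n)]
        _ ≤ ρ * (μ S).toReal + C.toReal * ((μ (E n)).toReal) ^ (1 / q) :=
            add_le_add_right (holder n) _
    have hbtend : Tendsto (fun n => ρ * (μ S).toReal + C.toReal * ((μ (E n)).toReal) ^ (1 / q))
        atTop (nhds (ρ * (μ S).toReal)) := by
      have := (tendsto_const_nhds (x := ρ * (μ S).toReal) (f := atTop (α := ℕ))).add
        ((tendsto_const_nhds (x := C.toReal)).mul hμE0)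
      simpa using this
    exact le_of_tendsto_of_tendsto' hgw hbtend hbound
  -- pass to a measurable representative
  set g : X → ℝ := hflim.1.mk flim with hg_def
  have hgm : Measurable g := hflim.1.stronglyMeasurable_mk.measurable
  have hae : flim =ᵐ[μ] g := hflim.1.ae_eq_mk
  have hgint : Integrable g μ := hintlim.congr hae
  have keyg : ∀ S : Set X, MeasurableSet S → ∫ x in S, g x ∂μ ≤ ρ * (μ S).toReal := by
    intro S hS
    calc ∫ x in S, g x ∂μ = ∫ x in S, flim x ∂μ :=
          (setIntegral_congr_ae hS (hae.mono fun x hx _ => hx.symm))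
      _ ≤ ρ * (μ S).toReal := key S hS
  have hzero : ∀ k : ℕ, μ {x | ρ + 1 / (k + 1) ≤ g x} = 0 := by
    intro k
    set S : Set X := {x | ρ + 1 / (k + 1) ≤ g x} with hS_def
    have hS : MeasurableSet S := measurableSet_le measurable_const hgm
    have hk : (0:ℝ) < 1 / (k + 1) := by positivity
    have hlow : (ρ + 1 / (k + 1)) * (μ S).toReal ≤ ∫ x in S, g x ∂μ :=
      by have := setIntegral_ge_of_const_le hS (measure_ne_top μ S) (fun x hx => hx) hgint.integrableOn
         rwa [smul_eq_mul, mul_comm, measureReal_def] at this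
    have := hlow.trans (keyg S hS)
    have hμ0 : (μ S).toReal = 0 := by nlinarith [ENNReal.toReal_nonneg (a := μ S)]
    exact (ENNReal.toReal_eq_zero_iff _).mp hμ0 |>.resolve_right (measure_ne_top μ S)
  have hae2 : ∀ᵐ x ∂μ, ∀ k : ℕ, g x < ρ + 1 / (k + 1) := by
    rw [ae_all_iff]
    intro k
    rw [ae_iff]
    simpa [not_lt] using hzero k
  filter_upwards [hae2, hae] with x hx hxe
  rw [hxe]
  by_contra h
  push_neg at h
  obtain ⟨k, hk⟩ := exists_nat_one_div_lt (sub_pos.mpr h)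
  have := hx k
  linarith
end

section
/- Let Q ⊂ ℝ^D be a bounded domain, {s_{n,N}} a regular summation method, and w_n ∈ L^∞(Q) a sequence with sup_n ‖w_n‖_{L^∞(Q)} < ∞, and let w ∈ L^∞(Q). Suppose that (1/N) Σ_{n=1}^N s_{n,N} w_n → w weakly-* in L^∞(Q) and (1/N) Σ_{n=1}^N s_{n,N} w_n² → w² weakly-* in L^∞(Q) as N → ∞. Then (1/N) Σ_{n=1}^N s_{n,N} ∫_Q |w_n − w|² dx → 0 as N → ∞. -/
open MeasureTheory Filter Finset
open scoped ENNReal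

/-- A regular summation method with uniform bound `sbar`. -/
def IsRegularSummation (s : ℕ → ℕ → ℝ) (sbar : ℝ) : Prop :=
  (∀ n N, 0 ≤ s n N) ∧ (∀ n N, s n N ≤ sbar) ∧
  (∀ n N, N < n → s n N = 0) ∧
  (∀ N : ℕ, ∑ n ∈ Finset.Icc 1 N, s n N = (N : ℝ))

/-- The step of Lemma 3.8 of the paper: if the weighted averages of `w_n` and of `w_n²`
converge weakly-* in `L^∞(Q)` to `w` and `w²`, then
`(1/N) ∑_{n=1}^N s_{n,N} ∫_Q |w_n − w|² dx → 0`. -/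
theorem weighted_averages_L2_distance_tendsto_zero
    {D : ℕ} (Q : Set (EuclideanSpace ℝ (Fin D)))
    (hQopen : IsOpen Q) (hQbdd : Bornology.IsBounded Q)
    (s : ℕ → ℕ → ℝ) (sbar : ℝ) (hreg : IsRegularSummation s sbar)
    (w : ℕ → EuclideanSpace ℝ (Fin D) → ℝ)
    (hwmeas : ∀ n, Measurable (w n))
    (C : ℝ) (hC : ∀ n, ∀ᵐ x ∂(volume.restrict Q), |w n x| ≤ C)
    (wlim : EuclideanSpace ℝ (Fin D) → ℝ)
    (hwlim : MemLp wlim ⊤ (volume.restrict Q))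
    (havg1 : ∀ g : EuclideanSpace ℝ (Fin D) → ℝ, Integrable g (volume.restrict Q) →
      Filter.Tendsto (fun N : ℕ =>
          ∫ x in Q, ((1 / (N : ℝ)) * ∑ n ∈ Finset.Icc 1 N, s n N * w n x) * g x)
        Filter.atTop (nhds (∫ x in Q, wlim x * g x)))
    (havg2 : ∀ g : EuclideanSpace ℝ (Fin D) → ℝ, Integrable g (volume.restrict Q) →
      Filter.Tendsto (fun N : ℕ =>
          ∫ x in Q, ((1 / (N : ℝ)) * ∑ n ∈ Finset.Icc 1 N, s n N * (w n x) ^ 2) * g x)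
        Filter.atTop (nhds (∫ x in Q, (wlim x) ^ 2 * g x))) :
    Filter.Tendsto (fun N : ℕ =>
        (1 / (N : ℝ)) * ∑ n ∈ Finset.Icc 1 N, s n N * ∫ x in Q, (w n x - wlim x) ^ 2)
      Filter.atTop (nhds 0) := by
  set μ := volume.restrict Q with hμdef
  have hfin : IsFiniteMeasure μ :=
    ⟨by rw [Measure.restrict_apply_univ]; exact hQbdd.measure_lt_top⟩
  -- integrability facts
  have hwn_top : ∀ n, MemLp (w n) ⊤ μ := fun n =>
    memLp_top_of_bound (hwmeas n).aestronglyMeasurable C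
      (by filter_upwards [hC n] with x hx using by simpa [Real.norm_eq_abs] using hx)
  have hwn2 : ∀ n, MemLp (w n) 2 μ := fun n => (hwn_top n).mono_exponent le_top
  have hwlim2 : MemLp wlim 2 μ := hwlim.mono_exponent le_top
  have hwlim_int : Integrable wlim μ :=
    memLp_one_iff_integrable.mp (hwlim.mono_exponent le_top)
  have hsq_n : ∀ n, Integrable (fun x => (w n x) ^ 2) μ := fun n => (hwn2 n).integrable_sq
  have hsq_lim : Integrable (fun x => (wlim x) ^ 2) μ := hwlim2.integrable_sq
  have hmul : ∀ n, Integrable (fun x => w n x * wlim x) μ := fun n =>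
    hwlim_int.bdd_mul (hwmeas n).aestronglyMeasurable
      (by filter_upwards [hC n] with x hx using by simpa [Real.norm_eq_abs] using hx)
  -- expansion of the square
  have expand : ∀ n, ∫ x, (w n x - wlim x) ^ 2 ∂μ =
      (∫ x, (w n x) ^ 2 ∂μ) - 2 * (∫ x, w n x * wlim x ∂μ) + ∫ x, (wlim x) ^ 2 ∂μ := by
    intro n
    have h1 : ∀ x, (w n x - wlim x) ^ 2
        = ((w n x) ^ 2 - 2 * (w n x * wlim x)) + (wlim x) ^ 2 := fun x => by ring
    simp_rw [h1]
    have hi1 : Integrable (fun x => w n x ^ 2 - 2 * (w n x * wlim x)) μ :=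
      (hsq_n n).sub ((hmul n).const_mul 2)
    have hi2 : Integrable (fun x => 2 * (w n x * wlim x)) μ := (hmul n).const_mul 2
    rw [integral_add hi1 hsq_lim, integral_sub (hsq_n n) hi2, integral_const_mul]
  -- swap identities
  have swapA : ∀ N : ℕ, ∫ x, ((1 / (N : ℝ)) * ∑ n ∈ Finset.Icc 1 N, s n N * (w n x) ^ 2) * (1 : ℝ) ∂μ
      = (1 / (N : ℝ)) * ∑ n ∈ Finset.Icc 1 N, s n N * ∫ x, (w n x) ^ 2 ∂μ := by
    intro N
    simp_rw [mul_one]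
    rw [integral_const_mul, integral_finset_sum _ (fun n _ => ((hsq_n n).const_mul (s n N)))]
    simp_rw [integral_const_mul]
  have swapB : ∀ N : ℕ, ∫ x, ((1 / (N : ℝ)) * ∑ n ∈ Finset.Icc 1 N, s n N * w n x) * wlim x ∂μ
      = (1 / (N : ℝ)) * ∑ n ∈ Finset.Icc 1 N, s n N * ∫ x, w n x * wlim x ∂μ := by
    intro N
    have h1 : ∀ x, ((1 / (N : ℝ)) * ∑ n ∈ Finset.Icc 1 N, s n N * w n x) * wlim x
        = (1 / (N : ℝ)) * ∑ n ∈ Finset.Icc 1 N, s n N * (w n x * wlim x) := by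
      intro x
      rw [mul_assoc, Finset.sum_mul]
      congr 1
      exact Finset.sum_congr rfl fun n _ => by ring
    simp_rw [h1]
    rw [integral_const_mul, integral_finset_sum _ (fun n _ => ((hmul n).const_mul (s n N)))]
    simp_rw [integral_const_mul]
  -- main combination
  have key : ∀ N : ℕ,
      (1 / (N : ℝ)) * ∑ n ∈ Finset.Icc 1 N, s n N * ∫ x, (w n x - wlim x) ^ 2 ∂μ
      = (∫ x, ((1 / (N : ℝ)) * ∑ n ∈ Finset.Icc 1 N, s n N * (w n x) ^ 2) * (1 : ℝ) ∂μ)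
        - 2 * (∫ x, ((1 / (N : ℝ)) * ∑ n ∈ Finset.Icc 1 N, s n N * w n x) * wlim x ∂μ)
        + ((1 / (N : ℝ)) * ∑ n ∈ Finset.Icc 1 N, s n N) * ∫ x, (wlim x) ^ 2 ∂μ := by
    intro N
    rw [swapA N, swapB N]
    simp_rw [expand]
    set K := ∫ x, (wlim x) ^ 2 ∂μ with hK
    have hsum : ∑ n ∈ Finset.Icc 1 N,
        s n N * ((∫ x, (w n x) ^ 2 ∂μ) - 2 * (∫ x, w n x * wlim x ∂μ) + K)
        = (∑ n ∈ Finset.Icc 1 N, s n N * ∫ x, (w n x) ^ 2 ∂μ)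
          - 2 * (∑ n ∈ Finset.Icc 1 N, s n N * ∫ x, w n x * wlim x ∂μ)
          + (∑ n ∈ Finset.Icc 1 N, s n N) * K := by
      calc ∑ n ∈ Finset.Icc 1 N,
          s n N * ((∫ x, (w n x) ^ 2 ∂μ) - 2 * (∫ x, w n x * wlim x ∂μ) + K)
          = ∑ n ∈ Finset.Icc 1 N,
            ((s n N * ∫ x, (w n x) ^ 2 ∂μ) - s n N * (2 * ∫ x, w n x * wlim x ∂μ)
              + s n N * K) := Finset.sum_congr rfl fun n _ => by ring
        _ = (∑ n ∈ Finset.Icc 1 N, s n N * ∫ x, (w n x) ^ 2 ∂μ)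
            - (∑ n ∈ Finset.Icc 1 N, s n N * (2 * ∫ x, w n x * wlim x ∂μ))
            + ∑ n ∈ Finset.Icc 1 N, s n N * K := by
            rw [Finset.sum_add_distrib, Finset.sum_sub_distrib]
        _ = _ := by
            rw [Finset.sum_mul]
            congr 1
            congr 1
            rw [Finset.mul_sum]
            exact Finset.sum_congr rfl fun n _ => by ring
    rw [hsum]
    ring
  -- limits of the three pieces
  have lim1 := havg2 (fun _ => (1 : ℝ)) (integrable_const 1)
  have lim2 := havg1 wlim hwlim_int
  have lim3 : Tendsto (fun N : ℕ => ((1 / (N : ℝ)) * ∑ n ∈ Finset.Icc 1 N, s n N)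
      * ∫ x, (wlim x) ^ 2 ∂μ) atTop (nhds (∫ x, (wlim x) ^ 2 ∂μ)) := by
    apply Tendsto.congr' _ tendsto_const_nhds
    filter_upwards [eventually_ge_atTop 1] with N hN
    rw [hreg.2.2.2 N, one_div, inv_mul_cancel₀ (by exact_mod_cast Nat.one_le_iff_ne_zero.mp hN),
      one_mul]
  have lim12 := ((lim1.sub (lim2.const_mul 2)).add lim3)
  have hfinal : (∫ x, (wlim x) ^ 2 * (1 : ℝ) ∂μ)
      - 2 * (∫ x, wlim x * wlim x ∂μ) + ∫ x, (wlim x) ^ 2 ∂μ = 0 := by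
    have h : ∀ x, wlim x * wlim x = (wlim x) ^ 2 := fun x => (sq (wlim x)).symm
    simp_rw [mul_one, h]
    ring
  rw [← hfinal]
  exact Tendsto.congr (fun N => (key N).symm) lim12
end

section
/- Let Q ⊂ ℝ^D be a bounded domain and let U_n : Q → ℝ^D be measurable functions such that the family {|U_n|}_{n≥1} is equi-integrable (uniformly integrable) in L^1(Q), and let U ∈ L^1(Q; ℝ^D). Suppose that for every continuous compactly supported function b : ℝ^D → ℝ one has b(U_n) → b(U) in L^2(Q) as n → ∞. Then U_n → U strongly in L^1(Q; ℝ^D). -/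
open MeasureTheory Filter
open scoped ENNReal

section AuxCutoff

variable {E : Type*} [NormedAddCommGroup E]

/-- A simple cutoff function: equal to `1` on the ball of radius `r`, vanishing outside the
ball of radius `r + 1`. -/
noncomputable def auxCutoff (r : ℝ) (v : E) : ℝ := max 0 (1 - max 0 (‖v‖ - r))

lemma auxCutoff_continuous (r : ℝ) : Continuous (auxCutoff (E := E) r) := by
  unfold auxCutoff; fun_prop

lemma auxCutoff_eq_one {r : ℝ} {v : E} (h : ‖v‖ ≤ r) : auxCutoff r v = 1 := by
  unfold auxCutoff
  have h1 : max 0 (‖v‖ - r) = 0 := max_eq_left (by linarith)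
  rw [h1, sub_zero]
  exact max_eq_right zero_le_one

lemma auxCutoff_eq_zero {r : ℝ} {v : E} (h : r + 1 ≤ ‖v‖) : auxCutoff r v = 0 := by
  unfold auxCutoff
  have h1 : max 0 (‖v‖ - r) = ‖v‖ - r := max_eq_right (by linarith)
  rw [h1]
  exact max_eq_left (by linarith)

lemma auxCutoff_hasCompactSupport [ProperSpace E] (r : ℝ) :
    HasCompactSupport (auxCutoff (E := E) r) := by
  refine HasCompactSupport.intro (isCompact_closedBall (0 : E) (r + 1)) fun v hv => ?_
  refine auxCutoff_eq_zero ?_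
  simp only [Metric.mem_closedBall, dist_zero_right, not_le] at hv
  linarith

end AuxCutoff

/-- The Dunford–Pettis step: if `{|U_n|}` is equi-integrable on a bounded domain `Q` and
`b(U_n) → b(U)` in `L²(Q)` for every `b ∈ C_c(ℝ^D)`, then `U_n → U` strongly in
`L¹(Q; ℝ^D)`. -/
theorem strong_L1_of_equiIntegrable_of_compositions
    {D : ℕ} (Q : Set (EuclideanSpace ℝ (Fin D)))
    (hQopen : IsOpen Q) (hQbdd : Bornology.IsBounded Q)
    (U : ℕ → EuclideanSpace ℝ (Fin D) → EuclideanSpace ℝ (Fin D))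
    (hUmeas : ∀ n, Measurable (U n))
    (hUint : ∀ n, Integrable (U n) (volume.restrict Q))
    (hequi : ∀ ε : ℝ, 0 < ε → ∃ δ : ℝ, 0 < δ ∧ ∀ n, ∀ A : Set (EuclideanSpace ℝ (Fin D)),
      MeasurableSet A → A ⊆ Q → volume A < ENNReal.ofReal δ →
        ∫ x in A, ‖U n x‖ < ε)
    (Ulim : EuclideanSpace ℝ (Fin D) → EuclideanSpace ℝ (Fin D))
    (hUlimint : Integrable Ulim (volume.restrict Q))
    (hb : ∀ b : EuclideanSpace ℝ (Fin D) → ℝ, Continuous b → HasCompactSupport b →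
      Filter.Tendsto (fun n : ℕ =>
          eLpNorm (fun x => b (U n x) - b (Ulim x)) 2 (volume.restrict Q))
        Filter.atTop (nhds 0)) :
    Filter.Tendsto (fun n : ℕ => ∫ x in Q, ‖U n x - Ulim x‖)
      Filter.atTop (nhds 0) := by
  -- trivial case `D = 0`
  rcases Nat.eq_zero_or_pos D with hD | hD
  · subst hD
    have hz : ∀ w : EuclideanSpace ℝ (Fin 0), ‖w‖ = 0 := fun w => by
      simp [EuclideanSpace.norm_eq]
    simp only [hz, integral_zero]
    exact tendsto_const_nhds
  set μ := volume.restrict Q with hμ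
  have hQm : MeasurableSet Q := hQopen.measurableSet
  haveI hfin : IsFiniteMeasure μ := by
    constructor
    rw [hμ, Measure.restrict_apply_univ]
    exact hQbdd.measure_lt_top
  -- uniform integrability
  have hui : UnifIntegrable (fun n => U n) 1 μ := by
    intro ε hε
    obtain ⟨δ, hδ, hδ'⟩ := hequi ε hε
    refine ⟨δ / 2, by linarith, fun n s hs hμs => ?_⟩
    rw [eLpNorm_indicator_eq_eLpNorm_restrict hs, hμ, Measure.restrict_restrict hs,
      eLpNorm_one_eq_lintegral_enorm]
    have hsub : s ∩ Q ⊆ Q := Set.inter_subset_right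
    have hvol : volume (s ∩ Q) < ENNReal.ofReal δ := by
      have h1 : volume (s ∩ Q) = μ s := (Measure.restrict_apply hs).symm
      rw [h1]
      exact lt_of_le_of_lt hμs (ENNReal.ofReal_lt_ofReal_iff hδ |>.2 (by linarith))
    have hint : Integrable (U n) (volume.restrict (s ∩ Q)) :=
      (hUint n).mono_measure (Measure.restrict_mono hsub le_rfl)
    have := ofReal_integral_norm_eq_lintegral_enorm hint
    rw [← this]
    exact ENNReal.ofReal_le_ofReal (hδ' n (s ∩ Q) (hs.inter hQm) hsub hvol).le
  -- convergence in measure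
  have htm : TendstoInMeasure μ U atTop Ulim := by
    rw [tendstoInMeasure_iff_dist]
    intro ε hε
    rw [ENNReal.tendsto_nhds_zero]
    intro c hc
    set c' := min c 1 with hc'def
    have hc'pos : 0 < c' := lt_min hc zero_lt_one
    have hc'ne : c' ≠ 0 := hc'pos.ne'
    have hc'top : c' ≠ ∞ := ((min_le_right c 1).trans_lt ENNReal.one_lt_top).ne
    have hc3ne : c' / 3 ≠ 0 := by
      simp [ENNReal.div_eq_zero_iff, hc'ne]
    have hc3top : c' / 3 ≠ ∞ := (ENNReal.div_lt_top hc'top (by norm_num)).ne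
    -- choice of the radius `K`
    have hI : (∫⁻ x, (‖Ulim x‖₊ : ℝ≥0∞) ∂μ) ≠ ∞ := hUlimint.2.ne
    obtain ⟨k, hk⟩ := ENNReal.exists_nat_gt
      (r := (∫⁻ x, (‖Ulim x‖₊ : ℝ≥0∞) ∂μ) / (c' / 3)) (ENNReal.div_lt_top hI hc3ne).ne
    set K : ℕ := k + 1 with hKdef
    have hKne : (K : ℝ≥0∞) ≠ 0 := by
      simp [hKdef]
    have hKtop : (K : ℝ≥0∞) ≠ ∞ := ENNReal.natCast_ne_top _
    have hkK : ((∫⁻ x, (‖Ulim x‖₊ : ℝ≥0∞) ∂μ) / (c' / 3)) < (K : ℝ≥0∞) :=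
      hk.trans_le (by exact_mod_cast Nat.le_succ k)
    -- the bad set for the limit
    have hE : μ {x | ((K : ℕ) : ℝ) ≤ ‖Ulim x‖} ≤ c' / 3 := by
      have hsub : {x | ((K : ℕ) : ℝ) ≤ ‖Ulim x‖}
          ⊆ {x | (K : ℝ≥0∞) ≤ (‖Ulim x‖₊ : ℝ≥0∞)} := by
        intro x hx
        have h2 : ENNReal.ofReal ((K : ℕ) : ℝ) ≤ ENNReal.ofReal ‖Ulim x‖ :=
          ENNReal.ofReal_le_ofReal hx
        simpa [ENNReal.ofReal_natCast, ofReal_norm, enorm_eq_nnnorm] using h2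
      refine (measure_mono hsub).trans ?_
      refine (meas_ge_le_lintegral_div hUlimint.aestronglyMeasurable.enorm hKne hKtop).trans ?_
      rw [ENNReal.div_le_iff_le_mul (Or.inl hKne) (Or.inl hKtop)]
      have h3 := (ENNReal.div_lt_iff (Or.inl hc3ne) (Or.inl hc3top)).1 hkK
      calc (∫⁻ x, (‖Ulim x‖₊ : ℝ≥0∞) ∂μ) ≤ (K : ℝ≥0∞) * (c' / 3) := h3.le
        _ = c' / 3 * (K : ℝ≥0∞) := mul_comm _ _
    -- the threshold for individual coordinates
    set ε' := ε / Real.sqrt D with hε'def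
    have hε' : 0 < ε' := div_pos hε (Real.sqrt_pos.2 (by exact_mod_cast hD))
    set a := ENNReal.ofReal ε' with hadef
    have ha0 : a ≠ 0 := by
      simp [hadef, ENNReal.ofReal_eq_zero, not_le, hε']
    have hatop : a ≠ ∞ := ENNReal.ofReal_ne_top
    -- cutoff test functions
    set b₁ : EuclideanSpace ℝ (Fin D) → ℝ := auxCutoff ((K : ℕ) : ℝ) with hb₁def
    set b₂ : Fin D → EuclideanSpace ℝ (Fin D) → ℝ :=
      fun i v => v i * auxCutoff (((K : ℕ) : ℝ) + 1) v with hb₂def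
    have hb₁c : Continuous b₁ := auxCutoff_continuous _
    have hb₁s : HasCompactSupport b₁ := auxCutoff_hasCompactSupport _
    have hproj : ∀ i : Fin D, Continuous fun v : EuclideanSpace ℝ (Fin D) => v i := fun i =>
      (EuclideanSpace.proj (𝕜 := ℝ) i).continuous
    have hb₂c : ∀ i, Continuous (b₂ i) := fun i => (hproj i).mul (auxCutoff_continuous _)
    have hb₂s : ∀ i, HasCompactSupport (b₂ i) := by
      intro i
      refine HasCompactSupport.intro
        (isCompact_closedBall (0 : EuclideanSpace ℝ (Fin D)) (((K : ℕ) : ℝ) + 1 + 1))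
        fun v hv => ?_
      have hcz : auxCutoff (((K : ℕ) : ℝ) + 1) v = 0 := by
        refine auxCutoff_eq_zero ?_
        simp only [Metric.mem_closedBall, dist_zero_right, not_le] at hv
        linarith
      simp [hb₂def, hcz]
    have he₁ := hb b₁ hb₁c hb₁s
    have he₂ := fun i => hb (b₂ i) (hb₂c i) (hb₂s i)
    -- constants
    have hDne : ((D : ℕ) : ℝ≥0∞) ≠ 0 := by exact_mod_cast hD.ne'
    have hDtop : ((D : ℕ) : ℝ≥0∞) ≠ ∞ := ENNReal.natCast_ne_top _
    set q := c' / 3 / ((D : ℕ) : ℝ≥0∞) with hqdef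
    have hq0 : q ≠ 0 := by
      simp [hqdef, ENNReal.div_eq_zero_iff, hc3ne, hDtop]
    have ha2 : a ^ (2 : ℝ) ≠ 0 := by
      simp [ENNReal.rpow_eq_zero_iff, ha0, hatop]
    set t₂ := min 1 (q * a ^ (2 : ℝ)) with ht₂def
    have ht₂pos : 0 < t₂ := lt_min zero_lt_one (ENNReal.mul_pos hq0 ha2)
    -- eventual smallness of the `L²` norms
    have hev₁ : ∀ᶠ n in atTop,
        eLpNorm (fun x => b₁ (U n x) - b₁ (Ulim x)) 2 μ ≤ min 1 (c' / 3) :=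
      ENNReal.tendsto_nhds_zero.1 he₁ _ (lt_min zero_lt_one (pos_iff_ne_zero.2 hc3ne))
    have hev₂ : ∀ᶠ n in atTop, ∀ i,
        eLpNorm (fun x => b₂ i (U n x) - b₂ i (Ulim x)) 2 μ ≤ t₂ :=
      eventually_all.2 fun i => ENNReal.tendsto_nhds_zero.1 (he₂ i) _ ht₂pos
    filter_upwards [hev₁, hev₂] with n h1 h2
    -- set inclusion
    have hsub : {x | ε ≤ dist (U n x) (Ulim x)}
        ⊆ {x | ((K : ℕ) : ℝ) ≤ ‖Ulim x‖}
          ∪ ({x | (1 : ℝ≥0∞) ≤ (‖b₁ (U n x) - b₁ (Ulim x)‖₊ : ℝ≥0∞)}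
            ∪ ⋃ i, {x | a ≤ (‖b₂ i (U n x) - b₂ i (Ulim x)‖₊ : ℝ≥0∞)}) := by
      intro x hx
      have hdist : ε ≤ ‖U n x - Ulim x‖ := by
        simpa [dist_eq_norm] using hx
      by_cases hxE : ((K : ℕ) : ℝ) ≤ ‖Ulim x‖
      · exact Or.inl hxE
      push_neg at hxE
      by_cases hxF : ((K : ℕ) : ℝ) + 1 ≤ ‖U n x‖
      · refine Or.inr (Or.inl ?_)
        have hz : b₁ (U n x) = 0 := auxCutoff_eq_zero hxF
        have ho : b₁ (Ulim x) = 1 := auxCutoff_eq_one hxE.le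
        rw [Set.mem_setOf_eq, hz, ho]
        norm_num
      push_neg at hxF
      -- some coordinate must differ by at least ε'
      have hkey : ∃ i, ε' ≤ |U n x i - Ulim x i| := by
        by_contra hcon
        push_neg at hcon
        have hterm : ∀ i, ‖(U n x - Ulim x) i‖ ^ 2 < ε' ^ 2 := by
          intro i
          have hi' : ‖(U n x - Ulim x) i‖ < ε' := by
            simpa [Real.norm_eq_abs, PiLp.sub_apply] using hcon i
          exact pow_lt_pow_left₀ hi' (norm_nonneg _) (by norm_num)
        have hne : (Finset.univ : Finset (Fin D)).Nonempty :=
          Finset.univ_nonempty_iff.2 ⟨⟨0, hD⟩⟩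
        have hsum : (∑ i, ‖(U n x - Ulim x) i‖ ^ 2) < ∑ _i : Fin D, ε' ^ 2 :=
          Finset.sum_lt_sum_of_nonempty hne fun i _ => hterm i
        have hsum' : (∑ _i : Fin D, ε' ^ 2) = (D : ℝ) * ε' ^ 2 := by
          simp [Finset.sum_const, Finset.card_univ, nsmul_eq_mul]
        have hlt : ‖U n x - Ulim x‖ < ε := by
          rw [EuclideanSpace.norm_eq]
          have h5 : Real.sqrt (∑ i, ‖(U n x - Ulim x) i‖ ^ 2)
              < Real.sqrt ((D : ℝ) * ε' ^ 2) :=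
            Real.sqrt_lt_sqrt (by positivity) (hsum.trans_eq hsum')
          have h6 : Real.sqrt ((D : ℝ) * ε' ^ 2) = Real.sqrt D * ε' := by
            rw [Real.sqrt_mul (by positivity), Real.sqrt_sq hε'.le]
          have h7 : Real.sqrt (D : ℝ) * ε' = ε := by
            rw [hε'def]
            have : Real.sqrt (D : ℝ) ≠ 0 := by positivity
            field_simp
          rw [h6, h7] at h5
          exact h5
        exact absurd hdist (not_le.2 hlt)
      obtain ⟨i, hi⟩ := hkey
      refine Or.inr (Or.inr (Set.mem_iUnion.2 ⟨i, ?_⟩))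
      have hbU : auxCutoff (((K : ℕ) : ℝ) + 1) (U n x) = 1 := auxCutoff_eq_one hxF.le
      have hbL : auxCutoff (((K : ℕ) : ℝ) + 1) (Ulim x) = 1 :=
        auxCutoff_eq_one (by linarith)
      have hval : b₂ i (U n x) - b₂ i (Ulim x) = U n x i - Ulim x i := by
        simp [hb₂def, hbU, hbL]
      rw [Set.mem_setOf_eq, hval, ← enorm_eq_nnnorm, ← ofReal_norm]
      exact ENNReal.ofReal_le_ofReal (by simpa [Real.norm_eq_abs] using hi)
    -- Chebyshev bounds
    have hmeas₁ : AEStronglyMeasurable (fun x => b₁ (U n x) - b₁ (Ulim x)) μ :=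
      (hb₁c.comp_aestronglyMeasurable (hUmeas n).aestronglyMeasurable).sub
        (hb₁c.comp_aestronglyMeasurable hUlimint.aestronglyMeasurable)
    have hμF : μ {x | (1 : ℝ≥0∞) ≤ (‖b₁ (U n x) - b₁ (Ulim x)‖₊ : ℝ≥0∞)} ≤ c' / 3 := by
      have hcheb := meas_ge_le_mul_pow_eLpNorm_enorm (μ := μ) (p := 2) (by norm_num) (by norm_num)
        hmeas₁ (ε := 1) one_ne_zero (fun h => absurd h ENNReal.one_ne_top)
      simp only [ENNReal.toReal_ofNat, inv_one, ENNReal.one_rpow, one_mul] at hcheb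
      refine hcheb.trans ?_
      calc eLpNorm (fun x => b₁ (U n x) - b₁ (Ulim x)) 2 μ ^ (2 : ℝ)
          ≤ (min 1 (c' / 3)) ^ (2 : ℝ) := ENNReal.rpow_le_rpow h1 (by norm_num)
        _ ≤ (min 1 (c' / 3)) ^ (1 : ℝ) :=
            ENNReal.rpow_le_rpow_of_exponent_ge (min_le_left _ _) (by norm_num)
        _ = min 1 (c' / 3) := ENNReal.rpow_one _
        _ ≤ c' / 3 := min_le_right _ _
    have hμG : ∀ i, μ {x | a ≤ (‖b₂ i (U n x) - b₂ i (Ulim x)‖₊ : ℝ≥0∞)} ≤ q := by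
      intro i
      have hmeas₂ : AEStronglyMeasurable (fun x => b₂ i (U n x) - b₂ i (Ulim x)) μ :=
        ((hb₂c i).comp_aestronglyMeasurable (hUmeas n).aestronglyMeasurable).sub
          ((hb₂c i).comp_aestronglyMeasurable hUlimint.aestronglyMeasurable)
      have hcheb := meas_ge_le_mul_pow_eLpNorm_enorm (μ := μ) (p := 2) (by norm_num) (by norm_num)
        hmeas₂ (ε := a) ha0 (fun h => absurd h hatop)
      simp only [ENNReal.toReal_ofNat] at hcheb
      refine hcheb.trans ?_
      have hstep : eLpNorm (fun x => b₂ i (U n x) - b₂ i (Ulim x)) 2 μ ^ (2 : ℝ)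
          ≤ q * a ^ (2 : ℝ) := by
        calc eLpNorm (fun x => b₂ i (U n x) - b₂ i (Ulim x)) 2 μ ^ (2 : ℝ)
            ≤ t₂ ^ (2 : ℝ) := ENNReal.rpow_le_rpow (h2 i) (by norm_num)
          _ ≤ t₂ ^ (1 : ℝ) :=
              ENNReal.rpow_le_rpow_of_exponent_ge (min_le_left _ _) (by norm_num)
          _ = t₂ := ENNReal.rpow_one _
          _ ≤ q * a ^ (2 : ℝ) := min_le_right _ _
      calc a⁻¹ ^ (2 : ℝ) * eLpNorm (fun x => b₂ i (U n x) - b₂ i (Ulim x)) 2 μ ^ (2 : ℝ)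
          ≤ a⁻¹ ^ (2 : ℝ) * (q * a ^ (2 : ℝ)) := by
            exact mul_le_mul_right hstep _
        _ = (a⁻¹ ^ (2 : ℝ) * a ^ (2 : ℝ)) * q := by ring
        _ = ((a⁻¹ * a) ^ (2 : ℝ)) * q := by
            rw [ENNReal.mul_rpow_of_ne_top (ENNReal.inv_ne_top.2 ha0) hatop]
        _ = q := by
            rw [ENNReal.inv_mul_cancel ha0 hatop, ENNReal.one_rpow, one_mul]
    -- put everything together
    have hfinal : μ {x | ε ≤ dist (U n x) (Ulim x)} ≤ c' / 3 + (c' / 3 + c' / 3) := by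
      refine (measure_mono hsub).trans ?_
      refine (measure_union_le _ _).trans ?_
      refine add_le_add hE ?_
      refine (measure_union_le _ _).trans ?_
      refine add_le_add hμF ?_
      refine (measure_iUnion_le _).trans ?_
      rw [tsum_fintype]
      calc (∑ i, μ {x | a ≤ (‖b₂ i (U n x) - b₂ i (Ulim x)‖₊ : ℝ≥0∞)})
          ≤ ∑ _i : Fin D, q := Finset.sum_le_sum fun i _ => hμG i
        _ = (D : ℝ≥0∞) * q := by
            simp [Finset.sum_const, Finset.card_univ, nsmul_eq_mul]
        _ = c' / 3 := ENNReal.mul_div_cancel hDne hDtop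
    calc μ {x | ε ≤ dist (U n x) (Ulim x)} ≤ c' / 3 + (c' / 3 + c' / 3) := hfinal
      _ = c' := by rw [← add_assoc]; exact ENNReal.add_thirds c'
      _ ≤ c := min_le_left _ _
  have hLp := tendsto_Lp_finite_of_tendstoInMeasure (μ := μ) le_rfl ENNReal.one_ne_top
    (fun n => (hUint n).aestronglyMeasurable) (memLp_one_iff_integrable.mpr hUlimint) hui htm
  have key : ∀ n, ENNReal.ofReal (∫ x in Q, ‖U n x - Ulim x‖)
      = eLpNorm (U n - Ulim) 1 μ := by
    intro n
    rw [eLpNorm_one_eq_lintegral_enorm]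
    have h := ofReal_integral_norm_eq_lintegral_enorm ((hUint n).sub hUlimint)
    simpa using h
  have h3 : (fun n => ∫ x in Q, ‖U n x - Ulim x‖)
      = fun n => (eLpNorm (U n - Ulim) 1 μ).toReal := by
    funext n
    rw [← key n, ENNReal.toReal_ofReal (integral_nonneg fun x => norm_nonneg _)]
  rw [h3]
  have := (ENNReal.tendsto_toReal (a := 0) (by simp)).comp hLp
  simpa [Function.comp_def] using this
end
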